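/- Let X_* be a chain complex with differential l_1 acyclic in positive degrees, with a contracting homotopy ρ in positive degrees (l_1 ρ + ρ l_1 = Id on elements of degree > 0). Suppose l_2 : X_0 ∧ X_0 → X_0 satisfies l_2(l_1 y, x) = 0 for all y ∈ X_1, x ∈ X_0 (condition (1) holds with zero right-hand side), and the Jacobi expression J(x_1,x_2,x_3) = l_2(l_2(x_1,x_2),x_3) + cyclic lies in the image of l_1 for all x_i ∈ X_0. Extend l_2 by zero to all elements of positive resolution degree. Then there exists a trilinear map l_3 of degree +1 with l_3 vanishing in positive resolution degree such that l_1 l_3 + l_2 ∘ l_2 = 0 on degree-zero triples, and moreover l_3 composed with the coderivation extension of l_2 vanishes, so that the maps (l_1, l_2, l_3, 0, 0, ...) satisfy all the sh Lie (L_∞) relations. -/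
import Mathlib


/-!
STATEMENT 1. `(X, l1)` is a nonnegatively graded chain complex of real vector
spaces, acyclic in positive degrees with contracting homotopy `ρ`
(`l1 ρ + ρ l1 = id` in positive degrees).  `l2` is a skew bilinear bracket on
`X 0` with `l2 (l1 y) x = 0` (condition (1) with zero right-hand side) and
whose Jacobi expression `J` is `l1`-exact.  Extending `l2` by zero in positive
resolution degree, there is a trilinear skew map `l3 : (X 0)³ → X 1`
(vanishing, like its extension, in positive resolution degree) such that
`l1 ∘ l3 + J = 0` and the composite of `l3` with the coderivation extension of
`l2` vanishes (written out on degree-zero quadruples with the Koszul signs of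
the (2,2)-unshuffles of suspended degree-one elements); these identities are
exactly the sh Lie (L∞) relations for `(l1, l2, l3, 0, 0, …)`.
-/
theorem stmt1
    (X : ℕ → Type) [∀ i, AddCommGroup (X i)] [∀ i, Module ℝ (X i)]
    (l1 : ∀ i, X (i + 1) →ₗ[ℝ] X i)
    (hdd : ∀ i (x : X (i + 2)), l1 i (l1 (i + 1) x) = 0)
    (ρ : ∀ i, X i →ₗ[ℝ] X (i + 1))
    (hhtpy : ∀ i (x : X (i + 1)), l1 (i + 1) (ρ (i + 1) x) + ρ i (l1 i x) = x)
    (l2 : X 0 →ₗ[ℝ] X 0 →ₗ[ℝ] X 0)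
    (hskew : ∀ x y : X 0, l2 x y = - l2 y x)
    (h1 : ∀ (y : X 1) (x : X 0), l2 (l1 0 y) x = 0)
    (hJ : ∀ x1 x2 x3 : X 0, ∃ y : X 1,
      l2 (l2 x1 x2) x3 + l2 (l2 x2 x3) x1 + l2 (l2 x3 x1) x2 = l1 0 y) :
    ∃ l3 : X 0 →ₗ[ℝ] X 0 →ₗ[ℝ] X 0 →ₗ[ℝ] X 1,
      (∀ x1 x2 x3 : X 0,
        l3 x1 x2 x3 = - l3 x2 x1 x3 ∧ l3 x1 x2 x3 = - l3 x1 x3 x2) ∧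
      (∀ x1 x2 x3 : X 0,
        l1 0 (l3 x1 x2 x3)
          + (l2 (l2 x1 x2) x3 + l2 (l2 x2 x3) x1 + l2 (l2 x3 x1) x2) = 0) ∧
      (∀ x1 x2 x3 x4 : X 0,
        l3 (l2 x1 x2) x3 x4 - l3 (l2 x1 x3) x2 x4 + l3 (l2 x1 x4) x2 x3
          + l3 (l2 x2 x3) x1 x4 - l3 (l2 x2 x4) x1 x3
          + l3 (l2 x3 x4) x1 x2 = 0) := by
  -- the Jacobi expression
  set J : X 0 → X 0 → X 0 → X 0 :=
    fun a b c => l2 (l2 a b) c + l2 (l2 b c) a + l2 (l2 c a) b with hJdef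
  -- l2 kills l1-exact elements (in either slot)
  have hzero : ∀ a b c d : X 0, l2 (J a b c) d = 0 := by
    intro a b c d
    obtain ⟨y, hy⟩ := hJ a b c
    simp only [hJdef]
    rw [hy, h1]
  -- the trilinear map
  refine ⟨{
    toFun := fun a => {
      toFun := fun b => {
        toFun := fun c => -(ρ 0 (J a b c))
        map_add' := by intro c c'; simp only [hJdef, map_add, LinearMap.add_apply]; abel
        map_smul' := by intro r c; simp only [hJdef, map_add, map_smul, LinearMap.smul_apply,
          RingHom.id_apply, smul_add, smul_neg] }
      map_add' := by
        intro b b'; ext c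
        simp only [hJdef, map_add, LinearMap.add_apply, LinearMap.coe_mk, AddHom.coe_mk]
        abel
      map_smul' := by
        intro r b; ext c
        simp only [hJdef, map_add, map_smul, LinearMap.smul_apply, RingHom.id_apply,
          LinearMap.coe_mk, AddHom.coe_mk, smul_add, smul_neg] }
    map_add' := by
      intro a a'; ext b c
      simp only [hJdef, map_add, LinearMap.add_apply, LinearMap.coe_mk, AddHom.coe_mk]
      abel
    map_smul' := by
      intro r a; ext b c
      simp only [hJdef, map_add, map_smul, LinearMap.smul_apply, RingHom.id_apply,
        LinearMap.coe_mk, AddHom.coe_mk, smul_add, smul_neg] }, ?_, ?_, ?_⟩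
  · -- skewness
    intro x1 x2 x3
    simp only [LinearMap.coe_mk, AddHom.coe_mk]
    constructor
    · have h : J x2 x1 x3 = -(J x1 x2 x3) := by
        simp only [hJdef]
        rw [hskew x2 x1, hskew x1 x3, hskew x3 x2]
        simp only [map_neg, LinearMap.neg_apply]
        abel
      rw [h, map_neg, neg_neg]
    · have h : J x1 x3 x2 = -(J x1 x2 x3) := by
        simp only [hJdef]
        rw [hskew x1 x3, hskew x3 x2, hskew x2 x1]
        simp only [map_neg, LinearMap.neg_apply]
        abel
      rw [h, map_neg, neg_neg]
  · -- l1 ∘ l3 + J = 0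
    intro x1 x2 x3
    simp only [LinearMap.coe_mk, AddHom.coe_mk]
    obtain ⟨y, hy⟩ := hJ x1 x2 x3
    have hJy : J x1 x2 x3 = l1 0 y := by simp only [hJdef]; exact hy
    have h2 : l1 0 (ρ 0 (l1 0 y)) = l1 0 y := by
      have hh := congrArg (l1 0) (hhtpy 0 y)
      rw [map_add, hdd 0, zero_add] at hh
      exact hh
    rw [hJy, hy, map_neg, h2]
    abel
  · -- the (2,2)-unshuffle identity
    intro x1 x2 x3 x4
    simp only [LinearMap.coe_mk, AddHom.coe_mk]
    have key : J (l2 x1 x2) x3 x4 - J (l2 x1 x3) x2 x4 + J (l2 x1 x4) x2 x3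
        + J (l2 x2 x3) x1 x4 - J (l2 x2 x4) x1 x3 + J (l2 x3 x4) x1 x2
        = l2 (J x1 x2 x3) x4 - l2 (J x1 x2 x4) x3 + l2 (J x1 x3 x4) x2
          - l2 (J x2 x3 x4) x1 := by
      simp only [hJdef, map_add, LinearMap.add_apply]
      simp only [hskew x3 x1, hskew x4 x1, hskew x4 x2,
        hskew x4 (l2 x1 x2), hskew x4 (l2 x1 x3), hskew x3 (l2 x1 x4),
        hskew x4 (l2 x2 x3), hskew x3 (l2 x2 x4), hskew x2 (l2 x3 x4),
        hskew (l2 x3 x4) (l2 x1 x2), hskew (l2 x2 x4) (l2 x1 x3),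
        hskew (l2 x2 x3) (l2 x1 x4), map_neg, LinearMap.neg_apply, neg_neg]
      abel
    rw [hzero, hzero, hzero, hzero] at key
    have key2 : J (l2 x1 x2) x3 x4 - J (l2 x1 x3) x2 x4 + J (l2 x1 x4) x2 x3
        + J (l2 x2 x3) x1 x4 - J (l2 x2 x4) x1 x3 + J (l2 x3 x4) x1 x2 = 0 := by
      rw [key]; abel
    have goal_eq : -(ρ 0 (J (l2 x1 x2) x3 x4)) - -(ρ 0 (J (l2 x1 x3) x2 x4))
        + -(ρ 0 (J (l2 x1 x4) x2 x3)) + -(ρ 0 (J (l2 x2 x3) x1 x4))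
        - -(ρ 0 (J (l2 x2 x4) x1 x3)) + -(ρ 0 (J (l2 x3 x4) x1 x2))
        = -(ρ 0 (J (l2 x1 x2) x3 x4 - J (l2 x1 x3) x2 x4 + J (l2 x1 x4) x2 x3
            + J (l2 x2 x3) x1 x4 - J (l2 x2 x4) x1 x3 + J (l2 x3 x4) x1 x2)) := by
      simp only [map_sub, map_add]; abel
    rw [goal_eq, key2, map_zero, neg_zero]
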